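/- Let q > 4l be a prime power and w = x^{a₁}y^{b₁}⋯x^{a_l}y^{b_l} with all a_i b_i coprime to q. Then the set Λ ⊆ F_{q²}^× of eigenvalues of elements of w(SL₂(F_q)) contains an element of multiplicative order at least 2√(q/l). -/

import Mathlib

open Polynomial


/-- Evaluation of the word `w = x^{a₁}y^{b₁}⋯x^{a_l}y^{b_l}` at a pair of group
elements. -/
def wordEval {G : Type*} [Group G] {l : ℕ} (a b : Fin l → ℤ) (g h : G) : G :=
  (List.ofFn fun i : Fin l => g ^ a i * h ^ b i).prod

noncomputable def pmat {F : Type} [Field F] (p : F × F) : Matrix (Fin 2) (Fin 2) (Polynomial F) :=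
  !![1 + C (p.1 * p.2) * X, C p.1 * X; C p.2, 1]

lemma natDegree_one_add_CX {F : Type} [Field F] (c : F) :
    ((1 : F[X]) + C c * X).natDegree ≤ 1 := by
  refine (natDegree_add_le _ _).trans ?_
  simp [natDegree_one]
  exact (natDegree_C_mul_le _ _).trans natDegree_X_le

lemma pmat_prod_props {F : Type} [Field F] (L : List (F × F)) :
    ((L.map pmat).prod 0 0).natDegree ≤ L.length ∧
    ((L.map pmat).prod 0 1).natDegree ≤ L.length ∧
    ((L.map pmat).prod 1 0).natDegree ≤ L.length ∧
    ((L.map pmat).prod 1 1).natDegree ≤ L.length ∧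
    ((L.map pmat).prod 0 0).coeff L.length = (L.map fun p => p.1 * p.2).prod ∧
    ((L.map pmat).prod 1 0).coeff L.length = 0 ∧
    (L ≠ [] → ((L.map pmat).prod 1 1).coeff L.length = 0) := by
  induction L with
  | nil => simp [Matrix.one_apply]
  | cons p L ih =>
    obtain ⟨h00, h01, h10, h11, c00, c10, c11⟩ := ih
    have hmul : ((p :: L).map pmat).prod = pmat p * (L.map pmat).prod := by
      simp [List.prod_cons]
    set M := (L.map pmat).prod with hM
    set n := L.length with hn
    have hlen : ((p :: L) : List (F × F)).length = n + 1 := by simp [hn]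
    have e00 : ((p :: L).map pmat).prod 0 0
        = (1 + C (p.1 * p.2) * X) * M 0 0 + (C p.1 * X) * M 1 0 := by
      rw [hmul]; simp [pmat, Matrix.mul_apply, Fin.sum_univ_two]
    have e01 : ((p :: L).map pmat).prod 0 1
        = (1 + C (p.1 * p.2) * X) * M 0 1 + (C p.1 * X) * M 1 1 := by
      rw [hmul]; simp [pmat, Matrix.mul_apply, Fin.sum_univ_two]
    have e10 : ((p :: L).map pmat).prod 1 0 = C p.2 * M 0 0 + M 1 0 := by
      rw [hmul]; simp [pmat, Matrix.mul_apply, Fin.sum_univ_two]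
    have e11 : ((p :: L).map pmat).prod 1 1 = C p.2 * M 0 1 + M 1 1 := by
      rw [hmul]; simp [pmat, Matrix.mul_apply, Fin.sum_univ_two]
    have deg1 : ∀ q : F[X], q.natDegree ≤ n → ((1 + C (p.1*p.2) * X) * q).natDegree ≤ n + 1 := by
      intro q hq
      refine (natDegree_mul_le).trans ?_
      have := natDegree_one_add_CX (p.1*p.2)
      omega
    have deg2 : ∀ q : F[X], q.natDegree ≤ n → ((C p.1 * X) * q).natDegree ≤ n + 1 := by
      intro q hq
      refine (natDegree_mul_le).trans ?_
      have : (C p.1 * X).natDegree ≤ 1 := (natDegree_C_mul_le _ _).trans natDegree_X_le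
      omega
    have deg3 : ∀ q : F[X], q.natDegree ≤ n → (C p.2 * q).natDegree ≤ n + 1 := by
      intro q hq
      refine (natDegree_C_mul_le _ _).trans (by omega)
    refine ⟨?_, ?_, ?_, ?_, ?_, ?_, ?_⟩
    · rw [hlen, e00]; exact (natDegree_add_le _ _).trans (max_le (deg1 _ h00) (deg2 _ h10))
    · rw [hlen, e01]; exact (natDegree_add_le _ _).trans (max_le (deg1 _ h01) (deg2 _ h11))
    · rw [hlen, e10]; exact (natDegree_add_le _ _).trans (max_le (deg3 _ h00) (h10.trans (Nat.le_succ n)))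
    · rw [hlen, e11]; exact (natDegree_add_le _ _).trans (max_le (deg3 _ h01) (h11.trans (Nat.le_succ n)))
    · rw [hlen, e00]
      have expand : (1 + C (p.1 * p.2) * X) * M 0 0 + (C p.1 * X) * M 1 0
          = M 0 0 + C (p.1*p.2) * (X * M 0 0) + C p.1 * (X * M 1 0) := by ring
      rw [expand]
      rw [coeff_add, coeff_add, coeff_C_mul, coeff_C_mul, coeff_X_mul, coeff_X_mul]
      rw [coeff_eq_zero_of_natDegree_lt (lt_of_le_of_lt h00 (Nat.lt_succ_self n)), c00, c10]
      simp only [List.map_cons, List.prod_cons]; ring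
    · rw [hlen, e10, coeff_add, coeff_C_mul]
      rw [coeff_eq_zero_of_natDegree_lt (lt_of_le_of_lt h00 (Nat.lt_succ_self n)),
          coeff_eq_zero_of_natDegree_lt (lt_of_le_of_lt h10 (Nat.lt_succ_self n))]
      ring
    · intro _
      rw [hlen, e11, coeff_add, coeff_C_mul]
      rw [coeff_eq_zero_of_natDegree_lt (lt_of_le_of_lt h01 (Nat.lt_succ_self n)),
          coeff_eq_zero_of_natDegree_lt (lt_of_le_of_lt h11 (Nat.lt_succ_self n))]
      ring

noncomputable def tracePoly {F : Type} [Field F] (L : List (F × F)) : F[X] :=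
  Matrix.trace (L.map pmat).prod

lemma tracePoly_props {F : Type} [Field F] (L : List (F × F)) (hL : L ≠ []) :
    (tracePoly L).coeff L.length = (L.map fun p => p.1 * p.2).prod ∧
    (tracePoly L).natDegree ≤ L.length := by
  obtain ⟨h00, _, _, h11, c00, _, c11⟩ := pmat_prod_props L
  constructor
  · rw [tracePoly, Matrix.trace_fin_two, coeff_add, c00, c11 hL, add_zero]
  · rw [tracePoly, Matrix.trace_fin_two]
    exact (natDegree_add_le _ _).trans (max_le h00 h11)

lemma card_le_mul_card_image_eval {F : Type} [Field F] [Fintype F] [DecidableEq F]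
    (P : F[X]) {n : ℕ} (hn : 0 < n) (hco : P.coeff n ≠ 0) (hdeg : P.natDegree ≤ n) :
    Fintype.card F ≤ n * (Finset.univ.image fun s => P.eval s).card := by
  have key : ∀ t : F, (Finset.univ.filter fun s => P.eval s = t).card ≤ n := by
    intro t
    have hQne : P - C t ≠ 0 := by
      intro h
      apply hco
      have hP : P = C t := sub_eq_zero.mp h
      rw [hP, coeff_C, if_neg (by omega)]
    have hQdeg : (P - C t).natDegree ≤ n :=
      (natDegree_sub_le _ _).trans (by simp [natDegree_C]; omega)
    have hsub : (Finset.univ.filter fun s => P.eval s = t) ⊆ (P - C t).roots.toFinset := by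
      intro s hs
      simp only [Finset.mem_filter] at hs
      rw [Multiset.mem_toFinset, mem_roots hQne]
      simp [IsRoot, hs.2]
    calc (Finset.univ.filter fun s => P.eval s = t).card
        ≤ (P - C t).roots.toFinset.card := Finset.card_le_card hsub
      _ ≤ Multiset.card (P - C t).roots := (P - C t).roots.toFinset_card_le
      _ ≤ (P - C t).natDegree := (P - C t).card_roots'
      _ ≤ n := hQdeg
  rw [← Finset.card_univ, Finset.card_eq_sum_card_image (fun s => P.eval s) Finset.univ]
  calc ∑ t ∈ Finset.univ.image fun s => P.eval s,
        (Finset.univ.filter fun s => P.eval s = t).card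
      ≤ (Finset.univ.image fun s => P.eval s).card * n :=
        Finset.sum_le_card_nsmul _ _ n (fun t _ => key t)
    _ = n * (Finset.univ.image fun s => P.eval s).card := mul_comm _ _

section SL2
variable {F : Type} [Field F]
open Matrix

noncomputable def upperSL (s : F) : SpecialLinearGroup (Fin 2) F :=
  ⟨!![1, s; 0, 1], by simp [Matrix.det_fin_two_of]⟩

noncomputable def lowerSL (u : F) : SpecialLinearGroup (Fin 2) F :=
  ⟨!![1, 0; u, 1], by simp [Matrix.det_fin_two_of]⟩

noncomputable def upperHom : Multiplicative F →* SpecialLinearGroup (Fin 2) F where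
  toFun := fun s => upperSL s.toAdd
  map_one' := by
    ext i j
    simp [upperSL]
    fin_cases i <;> fin_cases j <;> simp [Matrix.one_fin_two]
  map_mul' := fun s t => by
    ext i j
    rw [Matrix.SpecialLinearGroup.coe_mul]
    simp only [upperSL, SpecialLinearGroup.coe_mul, Matrix.mul_fin_two]
    fin_cases i <;> fin_cases j <;> simp [add_comm]

noncomputable def lowerHom : Multiplicative F →* SpecialLinearGroup (Fin 2) F where
  toFun := fun s => lowerSL s.toAdd
  map_one' := by
    ext i j
    simp [lowerSL]
    fin_cases i <;> fin_cases j <;> simp [Matrix.one_fin_two]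
  map_mul' := fun s t => by
    ext i j
    rw [Matrix.SpecialLinearGroup.coe_mul]
    simp only [lowerSL, SpecialLinearGroup.coe_mul, Matrix.mul_fin_two]
    fin_cases i <;> fin_cases j <;> simp [add_comm]

lemma upperSL_zpow (s : F) (n : ℤ) : upperSL s ^ n = upperSL ((n : F) * s) := by
  have h1 : upperSL s = upperHom (Multiplicative.ofAdd s) := rfl
  rw [h1, ← map_zpow, ← ofAdd_zsmul]
  norm_num [upperHom]

lemma lowerSL_zpow (s : F) (n : ℤ) : lowerSL s ^ n = lowerSL ((n : F) * s) := by
  have h1 : lowerSL s = lowerHom (Multiplicative.ofAdd s) := rfl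
  rw [h1, ← map_zpow, ← ofAdd_zsmul]
  norm_num [lowerHom]

end SL2

section Eval
variable {F : Type} [Field F]
open Matrix

lemma pmat_eval (p : F × F) (s : F) :
    (pmat p).map (Polynomial.eval s) = !![1, p.1 * s; 0, 1] * !![1, 0; p.2, 1] := by
  ext i j
  fin_cases i <;> fin_cases j <;>
    simp [pmat, Matrix.mul_fin_two, Matrix.map_apply] <;> ring

noncomputable def slCoeHom : SpecialLinearGroup (Fin 2) F →* Matrix (Fin 2) (Fin 2) F where
  toFun := fun g => ↑g
  map_one' := by simp
  map_mul' := by simp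

lemma wordEval_coe_eq {l : ℕ} (a b : Fin l → ℤ) (s : F) :
    ((wordEval a b (upperSL s) (lowerSL (1:F)) : SpecialLinearGroup (Fin 2) F) :
        Matrix (Fin 2) (Fin 2) F)
      = (((List.ofFn fun i => (((a i : F)), ((b i : F)))).map pmat).prod).map
          (Polynomial.eval s) := by
  have h1 : ((wordEval a b (upperSL s) (lowerSL (1:F)) : SpecialLinearGroup (Fin 2) F) :
      Matrix (Fin 2) (Fin 2) F)
      = slCoeHom (wordEval a b (upperSL s) (lowerSL (1:F))) := rfl
  rw [h1, wordEval, map_list_prod]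
  have h2 : (((List.ofFn fun i => (((a i : F)), ((b i : F)))).map pmat).prod).map
        (Polynomial.eval s)
      = ((Polynomial.evalRingHom s).mapMatrix)
          (((List.ofFn fun i => (((a i : F)), ((b i : F)))).map pmat).prod) := rfl
  rw [h2, map_list_prod]
  congr 1
  rw [List.map_ofFn, List.map_ofFn, List.map_ofFn]
  congr 1
  funext i
  simp only [Function.comp_apply, _root_.map_mul, upperSL_zpow, lowerSL_zpow, mul_one,
    RingHom.mapMatrix_apply, Polynomial.coe_evalRingHom, pmat_eval]
  rfl

lemma wordEval_trace {l : ℕ} (a b : Fin l → ℤ) (s : F) :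
    Matrix.trace ((wordEval a b (upperSL s) (lowerSL (1:F)) : SpecialLinearGroup (Fin 2) F) :
        Matrix (Fin 2) (Fin 2) F)
      = (tracePoly (List.ofFn fun i => (((a i : F)), ((b i : F))))).eval s := by
  rw [wordEval_coe_eq, tracePoly, Matrix.trace_fin_two, Matrix.trace_fin_two]
  simp [Matrix.map_apply]

end Eval

lemma exists_root_in_quadratic_ext (F : Type) [Field F] [Fintype F]
    (E : Type) [Field E] [Algebra F E] (hE : Module.finrank F E = 2)
    (f : F[X]) (hf2 : f.natDegree = 2) :
    ∃ x : E, (f.map (algebraMap F E)).eval x = 0 := by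
  classical
  have hf1 : f ≠ 0 := fun h => by simp [h] at hf2
  haveI : FiniteDimensional F E := .of_finrank_eq_succ hE
  haveI : Finite E := Module.finite_of_finite F
  letI : Fintype E := Fintype.ofFinite E
  set q := Fintype.card F with hq
  have cardE : Fintype.card E = q ^ 2 := by
    rw [Module.card_eq_pow_finrank (K := F) (V := E), hE]
  have hnotunit : ¬ IsUnit f := fun h => by
    have := Polynomial.natDegree_eq_zero_of_isUnit h
    omega
  obtain ⟨g, hgirr, hgdvd⟩ := WfDvdMonoid.exists_irreducible_factor hnotunit hf1
  haveI : Fact (Irreducible g) := ⟨hgirr⟩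
  have hg0 : g ≠ 0 := hgirr.ne_zero
  set K := AdjoinRoot g
  set r : K := AdjoinRoot.root g
  set pb := AdjoinRoot.powerBasis hg0 with hpb
  haveI : Module.Finite F K := Module.Finite.of_basis pb.basis
  haveI : Finite K := Module.finite_of_finite F
  letI : Fintype K := Fintype.ofFinite K
  have hdim : Module.finrank F K = g.natDegree := by
    rw [pb.finrank, hpb, AdjoinRoot.powerBasis_dim]
  have hd1 : 1 ≤ g.natDegree := hgirr.natDegree_pos
  have hd2 : g.natDegree ≤ 2 := hf2 ▸ Polynomial.natDegree_le_of_dvd hgdvd hf1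
  have cardK : Fintype.card K = q ^ g.natDegree := by
    rw [Module.card_eq_pow_finrank (K := F) (V := K), hdim]
  have hrpow : r ^ q ^ 2 = r := by
    interval_cases h : g.natDegree
    · have h1 : r ^ q = r := by
        have := FiniteField.pow_card r
        rw [cardK, pow_one] at this; exact this
      rw [pow_two, pow_mul, h1, h1]
    · have := FiniteField.pow_card r
      rwa [cardK] at this
  have hmindvd : minpoly F r ∣ (X : F[X]) ^ q ^ 2 - X :=
    minpoly.dvd F r (by
      simp only [map_sub, map_pow, Polynomial.aeval_X]
      rw [hrpow, sub_self])
  have hgmin : g ∣ (X : F[X]) ^ q ^ 2 - X := by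
    refine dvd_trans ?_ hmindvd
    rw [AdjoinRoot.minpoly_root hg0]
    exact dvd_mul_right _ _
  have hbigne : ((X : F[X]) ^ q ^ 2 - X) ≠ 0 := by
    have : 1 < q := Fintype.one_lt_card
    exact FiniteField.X_pow_card_sub_X_ne_zero _ (by nlinarith)
  have hsplitsbig : Polynomial.Splits (((X : F[X]) ^ q ^ 2 - X).map (algebraMap F E)) := by
    have hmapped : ((X : F[X]) ^ q ^ 2 - X).map (algebraMap F E)
        = (X : E[X]) ^ Fintype.card E - X := by
      simp [Polynomial.map_sub, Polynomial.map_pow, cardE]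
    rw [hmapped, Polynomial.splits_iff_card_roots, FiniteField.roots_X_pow_card_sub_X,
      FiniteField.X_pow_card_sub_X_natDegree_eq _ Fintype.one_lt_card]
    simp
  have hsplitsg : Polynomial.Splits (g.map (algebraMap F E)) :=
    hsplitsbig.of_dvd (Polynomial.map_ne_zero hbigne) (Polynomial.map_dvd _ hgmin)
  obtain ⟨x, hx⟩ := hsplitsg.exists_eval_eq_zero (by
    rw [Polynomial.degree_map, Polynomial.degree_eq_natDegree hg0]
    have hne : g.natDegree ≠ 0 := by omega
    exact_mod_cast hne)
  obtain ⟨h, hfh⟩ := hgdvd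
  refine ⟨x, ?_⟩
  rw [Polynomial.eval_map, hfh, Polynomial.eval₂_mul, ← Polynomial.eval_map, hx, zero_mul]

lemma hasEigenvalue_of_root {E : Type} [Field E] (M : Matrix (Fin 2) (Fin 2) E) (lam : E)
    (hdet : M.det = 1) (hroot : lam * lam - Matrix.trace M * lam + 1 = 0) :
    Module.End.HasEigenvalue (Matrix.toLin' M) lam := by
  have hdet0 : (M - lam • 1).det = 0 := by
    rw [Matrix.det_fin_two] at hdet ⊢
    rw [Matrix.trace_fin_two] at hroot
    simp only [Matrix.sub_apply, Matrix.smul_apply, Matrix.one_apply_eq,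
      Matrix.one_apply_ne (by decide : (0 : Fin 2) ≠ 1),
      Matrix.one_apply_ne (by decide : (1 : Fin 2) ≠ 0), smul_eq_mul, mul_one, mul_zero,
      sub_zero]
    linear_combination hroot + hdet
  obtain ⟨v, hv0, hv⟩ := (Matrix.exists_mulVec_eq_zero_iff).mpr hdet0
  have hmv : Matrix.toLin' M v = lam • v := by
    rw [Matrix.sub_mulVec, sub_eq_zero] at hv
    rw [Matrix.toLin'_apply, hv, Matrix.smul_mulVec, Matrix.one_mulVec]
  exact Module.End.hasEigenvalue_of_hasEigenvector
    ⟨Module.End.mem_eigenspace_iff.mpr hmv, hv0⟩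

def Phi (N : ℕ) : ℕ := ∑ d ∈ Finset.range (N + 1), d.totient

lemma Phi_le_of_le_three {N : ℕ} (h : N ≤ 3) : Phi N ≤ 4 := by
  interval_cases N <;> decide

lemma Phi_bound {N : ℕ} (h : 4 ≤ N) : 2 * Phi N + 4 ≤ N ^ 2 := by
  induction N, h using Nat.le_induction with
  | base => decide
  | succ N hN ih =>
    have h1 : Phi (N + 1) = Phi N + (N + 1).totient := by
      rw [Phi, Phi, Finset.sum_range_succ]
    have h2 : (N + 1).totient < N + 1 := Nat.totient_lt _ (by omega)
    nlinarith

lemma card_orderOf_le_Phi (G : Type) [Group G] [Fintype G] [IsCyclic G] (N : ℕ) :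
    (Finset.univ.filter fun u : G => orderOf u ≤ N).card ≤ Phi N := by
  classical
  have hsub : (Finset.univ.filter fun u : G => orderOf u ≤ N) ⊆
      (Finset.range (N + 1)).biUnion fun d => Finset.univ.filter fun u : G => orderOf u = d := by
    intro u hu
    simp only [Finset.mem_filter, Finset.mem_biUnion, Finset.mem_range] at hu ⊢
    exact ⟨orderOf u, by omega, by simp⟩
  refine (Finset.card_le_card hsub).trans ((Finset.card_biUnion_le).trans ?_)
  refine Finset.sum_le_sum fun d _ => ?_
  by_cases hd : d ∣ Fintype.card G
  · have := IsCyclic.card_orderOf_eq_totient (α := G) (d := d) hd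
    convert this.le using 2
  · have : (Finset.univ.filter fun u : G => orderOf u = d) = ∅ := by
      ext u
      simp only [Finset.mem_filter, Finset.notMem_empty, iff_false]
      rintro ⟨-, rfl⟩
      exact hd (orderOf_dvd_card)
    simp [this]

lemma orderOf_inv_field {E : Type} [Field E] (x : E) (hx : x ≠ 0) :
    orderOf x⁻¹ = orderOf x := by
  have h1 : x⁻¹ = ((Units.mk0 x hx)⁻¹ : Eˣ) := by simp
  rw [h1, orderOf_units, orderOf_inv, ← orderOf_units, Units.val_mk0]

lemma pairs_card_le {E : Type} [Field E] [Fintype E] [DecidableEq E] (N : ℕ)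
    (P : Finset (Finset E))
    (hP : ∀ p ∈ P, ∃ x : E, x ≠ 0 ∧ orderOf x ≤ N ∧ p = {x, x⁻¹}) :
    2 * P.card ≤ Phi N + 2 := by
  classical
  set S := Finset.univ.filter fun x : E => x ≠ 0 ∧ orderOf x ≤ N with hS
  -- each pair is a subset of S
  have hsubS : ∀ p ∈ P, p ⊆ S := by
    intro p hp
    obtain ⟨x, hx0, hxN, rfl⟩ := hP p hp
    intro z hz
    rcases Finset.mem_insert.mp hz with rfl | hz
    · simp only [hS, Finset.mem_filter, Finset.mem_univ, true_and]
      exact ⟨hx0, hxN⟩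
    · rw [Finset.mem_singleton] at hz
      subst hz
      simp only [hS, Finset.mem_filter, Finset.mem_univ, true_and]
      exact ⟨inv_ne_zero hx0, by rw [orderOf_inv_field x hx0]; exact hxN⟩
  -- pairwise disjoint
  have hdisj : ∀ p₁ ∈ P, ∀ p₂ ∈ P, p₁ ≠ p₂ → Disjoint p₁ p₂ := by
    intro p₁ hp₁ p₂ hp₂ hne
    obtain ⟨x, hx0, -, rfl⟩ := hP p₁ hp₁
    obtain ⟨y, hy0, -, rfl⟩ := hP p₂ hp₂
    rw [Finset.disjoint_left]
    intro z hz1 hz2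
    apply hne
    have e1 : ({x, x⁻¹} : Finset E) = {z, z⁻¹} := by
      rcases Finset.mem_insert.mp hz1 with rfl | h
      · rfl
      · rw [Finset.mem_singleton] at h
        subst h
        rw [inv_inv, Finset.pair_comm]
    have e2 : ({y, y⁻¹} : Finset E) = {z, z⁻¹} := by
      rcases Finset.mem_insert.mp hz2 with rfl | h
      · rfl
      · rw [Finset.mem_singleton] at h
        subst h
        rw [inv_inv, Finset.pair_comm]
    rw [e1, e2]
  -- sum of cards
  have hsum : ∑ p ∈ P, p.card ≤ S.card := by
    rw [← Finset.card_biUnion hdisj]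
    apply Finset.card_le_card
    intro z hz
    rw [Finset.mem_biUnion] at hz
    obtain ⟨p, hp, hzp⟩ := hz
    exact hsubS p hp hzp
  -- lower bound for sum of cards
  set P1 := P.filter fun p => p.card = 1 with hP1
  have hP1sub : P1 ⊆ {({1} : Finset E), ({-1} : Finset E)} := by
    intro p hp
    rw [hP1, Finset.mem_filter] at hp
    obtain ⟨hpP, hpc⟩ := hp
    obtain ⟨x, hx0, -, rfl⟩ := hP p hpP
    have hxx : x = x⁻¹ := by
      by_contra hne
      rw [Finset.card_insert_of_notMem (by simp [hne]), Finset.card_singleton] at hpc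
      omega
    have hx2 : x * x = 1 := by
      nth_rewrite 2 [hxx]
      exact (mul_inv_cancel₀ hx0)
    rcases mul_self_eq_one_iff.mp hx2 with rfl | rfl
    · simp
    · rw [Finset.mem_insert, Finset.mem_singleton]
      right
      rw [inv_neg, inv_one]
      simp
  have hP1card : P1.card ≤ 2 := by
    refine (Finset.card_le_card hP1sub).trans ?_
    exact (Finset.card_insert_le _ _).trans (by simp)
  have hcard2 : ∀ p ∈ P, p.card ≤ 2 ∧ 1 ≤ p.card := by
    intro p hp
    obtain ⟨x, hx0, -, rfl⟩ := hP p hp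
    constructor
    · exact (Finset.card_insert_le _ _).trans (by simp)
    · have : x ∈ ({x, x⁻¹} : Finset E) := by simp
      exact Finset.card_pos.mpr ⟨x, this⟩
  have hsplit : 2 * P.card ≤ (∑ p ∈ P, p.card) + P1.card := by
    have : ∑ p ∈ P, 2 ≤ ∑ p ∈ P, (p.card + if p.card = 1 then 1 else 0) := by
      refine Finset.sum_le_sum fun p hp => ?_
      have := hcard2 p hp
      by_cases h1 : p.card = 1 <;> simp [h1] <;> omega
    rw [Finset.sum_const, smul_eq_mul, mul_comm] at this
    refine this.trans ?_
    rw [Finset.sum_add_distrib]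
    gcongr
    rw [Finset.sum_boole]
    simp [hP1]
  have hScard : S.card ≤ Phi N := by
    refine le_trans ?_ (card_orderOf_le_Phi Eˣ N)
    refine Finset.card_le_card_of_injOn (fun x => if h : x = 0 then 1 else Units.mk0 x h) ?_ ?_
    · intro x hx
      rw [Finset.mem_coe, Finset.mem_filter] at hx
      obtain ⟨-, hx0, hxN⟩ := hx
      dsimp only
      rw [dif_neg hx0]
      simp only [Finset.mem_coe, Finset.mem_filter, Finset.mem_univ, true_and]
      rw [← orderOf_units, Units.val_mk0]
      exact hxN
    · intro x hx y hy hxy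
      simp only [Finset.mem_coe, hS, Finset.mem_filter, Finset.mem_univ, true_and] at hx hy
      dsimp only at hxy
      rw [dif_neg hx.1, dif_neg hy.1] at hxy
      have := congrArg (Units.val) hxy
      simpa using this
  omega

/-- Let `q > 4l` be a prime power and `w = x^{a₁}y^{b₁}⋯x^{a_l}y^{b_l}`
with all exponents nonzero and coprime to `q`. Then the set `Λ ⊆ F_{q²}^×` of
eigenvalues of elements of `w(SL₂(F_q))` contains an element of multiplicative order
at least `2√(q/l)`. -/
theorem word_image_has_eigenvalue_of_large_order
    (l : ℕ) (hl : 0 < l) (a b : Fin l → ℤ) (ha : ∀ i, a i ≠ 0) (hb : ∀ i, b i ≠ 0)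
    (F : Type) [Field F] [Fintype F]
    (hq : 4 * l < Fintype.card F)
    (hpa : ∀ i, ¬ ((ringChar F : ℤ) ∣ a i)) (hpb : ∀ i, ¬ ((ringChar F : ℤ) ∣ b i))
    (E : Type) [Field E] [Algebra F E] (hE : Module.finrank F E = 2) :
    ∃ lam : E,
      (∃ g h : Matrix.SpecialLinearGroup (Fin 2) F,
        Module.End.HasEigenvalue
          (Matrix.toLin'
            (((wordEval a b g h : Matrix.SpecialLinearGroup (Fin 2) F) :
                Matrix (Fin 2) (Fin 2) F).map (algebraMap F E))) lam) ∧
      2 * Real.sqrt ((Fintype.card F : ℝ) / l) ≤ (orderOf lam : ℝ) := by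
  classical
  haveI : FiniteDimensional F E := .of_finrank_eq_succ hE
  haveI : Finite E := Module.finite_of_finite F
  letI : Fintype E := Fintype.ofFinite E
  by_contra hcon
  push_neg at hcon
  set q := Fintype.card F with hqdef
  set rr : ℝ := 2 * Real.sqrt ((q : ℝ) / l) with hrr
  have hq0 : 0 < q := Fintype.card_pos
  have hrpos : 0 < rr := by
    rw [hrr]
    apply mul_pos two_pos
    apply Real.sqrt_pos.mpr
    positivity
  set N : ℕ := ⌈rr⌉₊ - 1 with hN
  have hceil : 1 ≤ ⌈rr⌉₊ := Nat.one_le_ceil_iff.mpr hrpos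
  have hNlt : (N : ℝ) < rr := by
    have h1 : (⌈rr⌉₊ : ℝ) < rr + 1 := Nat.ceil_lt_add_one hrpos.le
    have h2 : (N : ℝ) = (⌈rr⌉₊ : ℝ) - 1 := by
      rw [hN]
      push_cast [hceil]
      ring
    rw [h2]; linarith
  have hNsq : l * N ^ 2 < 4 * q := by
    have h1 : (N:ℝ)^2 < rr^2 := by
      have := (Nat.cast_nonneg (α := ℝ) N)
      nlinarith
    have h2 : rr ^ 2 = 4 * ((q:ℝ)/l) := by
      rw [hrr, mul_pow, Real.sq_sqrt (by positivity)]
      ring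
    have hlR : (0:ℝ) < l := by exact_mod_cast hl
    have h3 : (l:ℝ) * (N:ℝ)^2 < 4 * (q:ℝ) := by
      rw [h2] at h1
      calc (l:ℝ) * (N:ℝ)^2 < l * (4 * ((q:ℝ)/l)) := by exact (mul_lt_mul_iff_right₀ hlR).mpr h1
        _ = 4 * q := by field_simp
    exact_mod_cast h3
  -- the trace polynomial
  set L : List (F × F) := List.ofFn (fun i => (((a i : F)), ((b i : F)))) with hL
  have hLlen : L.length = l := by rw [hL]; simp
  have hLne : L ≠ [] := by
    intro h
    rw [h] at hLlen
    simp at hLlen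
    omega
  have hprod : (L.map fun p => p.1 * p.2).prod ≠ 0 := by
    apply List.prod_ne_zero
    intro hzero
    rw [hL, List.map_ofFn, List.mem_ofFn] at hzero
    obtain ⟨i, hi⟩ := hzero
    simp only [Function.comp_apply] at hi
    have hai : ((a i : F)) ≠ 0 := fun h0 =>
      hpa i ((CharP.intCast_eq_zero_iff F (ringChar F) (a i)).mp h0)
    have hbi : ((b i : F)) ≠ 0 := fun h0 =>
      hpb i ((CharP.intCast_eq_zero_iff F (ringChar F) (b i)).mp h0)
    exact mul_ne_zero hai hbi hi
  obtain ⟨hco, hdeg⟩ := tracePoly_props L hLne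
  rw [hLlen] at hco hdeg
  set TP := tracePoly L with hTP
  set 𝒯 := Finset.univ.image (fun s : F => TP.eval s) with hT
  have hcard1 : q ≤ l * 𝒯.card :=
    card_le_mul_card_image_eval TP hl (by rw [hco]; exact hprod) hdeg
  -- eigenvalues for each attained trace
  have key : ∀ t ∈ 𝒯, ∃ lam : E,
      lam ≠ 0 ∧ orderOf lam ≤ N ∧ lam + lam⁻¹ = algebraMap F E t := by
    intro t ht
    rw [hT, Finset.mem_image] at ht
    obtain ⟨s, -, hst⟩ := ht
    set W : Matrix (Fin 2) (Fin 2) F :=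
      ((wordEval a b (upperSL s) (lowerSL (1:F)) : Matrix.SpecialLinearGroup (Fin 2) F) :
        Matrix (Fin 2) (Fin 2) F) with hW
    have htr : Matrix.trace W = t := by
      rw [hW, wordEval_trace, ← hL, ← hTP, hst]
    have hdetW : W.det = 1 := (wordEval a b (upperSL s) (lowerSL (1:F))).prop
    set ME := W.map (algebraMap F E) with hME
    have htrE : Matrix.trace ME = algebraMap F E t := by
      rw [hME, Matrix.trace_fin_two, Matrix.map_apply, Matrix.map_apply, ← map_add,
        ← Matrix.trace_fin_two, htr]
    have hdetE : ME.det = 1 := by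
      rw [hME, ← RingHom.mapMatrix_apply, ← RingHom.map_det, hdetW, map_one]
    obtain ⟨lam, hx⟩ := exists_root_in_quadratic_ext F E hE (X^2 - C t * X + C 1) (by
      have hid : (X^2 - C t * X + C 1 : F[X]) = C 1 * X^2 + C (-t) * X + C 1 := by
        simp [map_neg]
        ring
      rw [hid]
      exact Polynomial.natDegree_quadratic one_ne_zero)
    have hlam : lam * lam - algebraMap F E t * lam + 1 = 0 := by
      simp only [Polynomial.map_add, Polynomial.map_sub, Polynomial.map_mul,
        Polynomial.map_pow, Polynomial.map_X, Polynomial.map_C, Polynomial.eval_add,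
        Polynomial.eval_sub, Polynomial.eval_mul, Polynomial.eval_pow, Polynomial.eval_X,
        Polynomial.eval_C, map_one, Polynomial.map_one, Polynomial.eval_one] at hx
      linear_combination hx
    have hlam0 : lam ≠ 0 := by
      intro h
      rw [h] at hlam
      simp at hlam
    have hmul : lam * (algebraMap F E t - lam) = 1 := by linear_combination -hlam
    have hinv : lam⁻¹ = algebraMap F E t - lam := inv_eq_of_mul_eq_one_right hmul
    have heig : Module.End.HasEigenvalue (Matrix.toLin' ME) lam :=
      hasEigenvalue_of_root ME lam hdetE (by rw [htrE]; exact hlam)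
    have hord : orderOf lam ≤ N := by
      have hlt := hcon lam ⟨upperSL s, lowerSL (1:F), heig⟩
      have := Nat.lt_ceil.mpr hlt
      omega
    exact ⟨lam, hlam0, hord, by rw [hinv]; ring⟩
  have key' : ∀ t : F, ∃ lam : E, t ∈ 𝒯 →
      (lam ≠ 0 ∧ orderOf lam ≤ N ∧ lam + lam⁻¹ = algebraMap F E t) := by
    intro t
    by_cases ht : t ∈ 𝒯
    · obtain ⟨lam, h⟩ := key t ht
      exact ⟨lam, fun _ => h⟩
    · exact ⟨1, fun h => absurd h ht⟩
  choose lamf hlamf using key'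
  set pf : F → Finset E := fun t => {lamf t, (lamf t)⁻¹} with hpf
  set P : Finset (Finset E) := 𝒯.image pf with hP
  have hinj : Set.InjOn pf 𝒯 := by
    intro t1 ht1 t2 ht2 hpe
    rw [Finset.mem_coe] at ht1 ht2
    obtain ⟨h01, hN1, hs1⟩ := hlamf t1 ht1
    obtain ⟨h02, hN2, hs2⟩ := hlamf t2 ht2
    have hmem : lamf t1 ∈ pf t2 := by
      rw [← hpe]
      simp [hpf]
    have hsum12 : algebraMap F E t1 = algebraMap F E t2 := by
      rw [← hs1, ← hs2]
      rcases Finset.mem_insert.mp hmem with h | h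
      · rw [h]
      · rw [Finset.mem_singleton] at h
        rw [h, inv_inv]
        ring
    exact (algebraMap F E).injective hsum12
  have hcardP : 𝒯.card = P.card := (Finset.card_image_of_injOn hinj).symm
  have hpair : ∀ p ∈ P, ∃ x : E, x ≠ 0 ∧ orderOf x ≤ N ∧ p = {x, x⁻¹} := by
    intro p hp
    rw [hP, Finset.mem_image] at hp
    obtain ⟨t, ht, rfl⟩ := hp
    obtain ⟨h0, hN', -⟩ := hlamf t ht
    exact ⟨lamf t, h0, hN', rfl⟩
  have hpc := pairs_card_le N P hpair
  -- final arithmetic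
  have hq2 : 2 * q ≤ l * (Phi N + 2) := by
    calc 2 * q ≤ 2 * (l * 𝒯.card) := by omega
      _ = l * (2 * P.card) := by rw [hcardP]; ring
      _ ≤ l * (Phi N + 2) := Nat.mul_le_mul_left _ hpc
  by_cases hN4 : N ≤ 3
  · have h5 := Phi_le_of_le_three hN4
    have h6 : l * (Phi N + 2) ≤ l * 6 := Nat.mul_le_mul_left _ (by omega)
    omega
  · have h4 : 4 ≤ N := by omega
    have hPhi := Phi_bound h4
    have h7 : l * (2 * Phi N + 4) ≤ l * N ^ 2 := Nat.mul_le_mul_left _ hPhi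
    nlinarith
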